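/- If players i and j are interchangeable in the game G, that is, i ≠ j and G(S ∪ {i}) = G(S ∪ {j}) for every coalition S ⊆ A \ {i, j}, then their Shapley uncertainties coincide: R_i(G) = R_j(G). -/
import Mathlib


open Finset

noncomputable def shapleyWeight (N : ℕ) (S : Finset (Fin N)) : ℝ :=
  ((Nat.factorial S.card : ℝ) * (Nat.factorial (N - S.card - 1) : ℝ)) / (Nat.factorial N : ℝ)

noncomputable def marginal (N : ℕ) (G : Finset (Fin N) → ℝ) (i : Fin N)
    (S : Finset (Fin N)) : ℝ :=
  G (insert i S) - G S

noncomputable def shapleyValue (N : ℕ) (G : Finset (Fin N) → ℝ) (i : Fin N) : ℝ :=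
  ∑ S ∈ (Finset.univ.erase i).powerset, shapleyWeight N S * marginal N G i S

noncomputable def shapleyUncertainty (N : ℕ) (G : Finset (Fin N) → ℝ) (i : Fin N) : ℝ :=
  ∑ S ∈ (Finset.univ.erase i).powerset,
    shapleyWeight N S * (marginal N G i S - shapleyValue N G i) ^ 2

lemma map_swap_of_notMem {N : ℕ} {i j : Fin N} {S : Finset (Fin N)}
    (hi : i ∉ S) (hj : j ∉ S) : S.map (Equiv.swap i j).toEmbedding = S := by
  ext a
  rw [Finset.mem_map_equiv, Equiv.symm_swap]
  rcases eq_or_ne a i with rfl | hai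
  · simp [Equiv.swap_apply_left]
    constructor
    · intro h; exact absurd h hj
    · intro h; exact absurd h hi
  · rcases eq_or_ne a j with rfl | haj
    · simp [Equiv.swap_apply_right]
      constructor
      · intro h; exact absurd h hi
      · intro h; exact absurd h hj
    · rw [Equiv.swap_apply_of_ne_of_ne hai haj]

lemma mem_map_swap {N : ℕ} {i j : Fin N} {S : Finset (Fin N)} :
    j ∈ S.map (Equiv.swap i j).toEmbedding ↔ i ∈ S := by
  rw [Finset.mem_map_equiv, Equiv.symm_swap, Equiv.swap_apply_right]

lemma marginal_swap {N : ℕ} (G : Finset (Fin N) → ℝ) (i j : Fin N) (hij : i ≠ j)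
    (hsym : ∀ S : Finset (Fin N), i ∉ S → j ∉ S → G (insert i S) = G (insert j S))
    (S : Finset (Fin N)) (hi : i ∉ S) :
    marginal N G i S = marginal N G j (S.map (Equiv.swap i j).toEmbedding) := by
  rcases em (j ∈ S) with hj | hj
  · set T := S.erase j with hT
    have hiT : i ∉ T := fun h => hi (Finset.mem_of_mem_erase h)
    have hjT : j ∉ T := Finset.notMem_erase _ _
    have hS : S = insert j T := (Finset.insert_erase hj).symm
    have hmap : S.map (Equiv.swap i j).toEmbedding = insert i T := by
      rw [hS, Finset.map_insert, map_swap_of_notMem hiT hjT, Equiv.coe_toEmbedding,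
        Equiv.swap_apply_right]
    rw [hmap]
    unfold marginal
    have h1 : insert j (insert i T) = insert i S := by
      rw [hS, Finset.insert_comm]
    have h2 : G (insert i T) = G S := by
      rw [hS]; exact hsym T hiT hjT
    rw [h1, h2, hS, ← hsym T hiT hjT]
  · rw [map_swap_of_notMem hi hj]
    unfold marginal
    rw [hsym S hi hj]

lemma shapleyValue_symm {N : ℕ} (G : Finset (Fin N) → ℝ) (i j : Fin N) (hij : i ≠ j)
    (hsym : ∀ S : Finset (Fin N), i ∉ S → j ∉ S → G (insert i S) = G (insert j S)) :
    shapleyValue N G i = shapleyValue N G j := by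
  unfold shapleyValue
  refine Finset.sum_nbij' (fun S => S.map (Equiv.swap i j).toEmbedding)
    (fun S => S.map (Equiv.swap i j).toEmbedding) ?_ ?_ ?_ ?_ ?_
  · intro S hS
    simp only [Finset.mem_powerset, Finset.subset_erase, Finset.subset_univ, true_and] at *
    rw [mem_map_swap]; exact hS
  · intro S hS
    simp only [Finset.mem_powerset, Finset.subset_erase, Finset.subset_univ, true_and] at *
    rw [Equiv.swap_comm, mem_map_swap]; exact hS
  · intro S hS
    ext a; simp [Finset.mem_map_equiv, Equiv.swap_apply_self]
  · intro S hS
    ext a; simp [Finset.mem_map_equiv, Equiv.swap_apply_self]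
  · intro S hS
    simp only [Finset.mem_powerset, Finset.subset_erase, Finset.subset_univ, true_and] at hS
    rw [← marginal_swap G i j hij hsym S hS]
    unfold shapleyWeight
    rw [Finset.card_map]

theorem shapley_uncertainty_symmetry (N : ℕ) (hN : 1 ≤ N) (G : Finset (Fin N) → ℝ)
    (i j : Fin N) (hij : i ≠ j)
    (hsym : ∀ S : Finset (Fin N), i ∉ S → j ∉ S → G (insert i S) = G (insert j S)) :
    shapleyUncertainty N G i = shapleyUncertainty N G j := by
  have hval := shapleyValue_symm G i j hij hsym
  unfold shapleyUncertainty
  refine Finset.sum_nbij' (fun S => S.map (Equiv.swap i j).toEmbedding)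
    (fun S => S.map (Equiv.swap i j).toEmbedding) ?_ ?_ ?_ ?_ ?_
  · intro S hS
    simp only [Finset.mem_powerset, Finset.subset_erase, Finset.subset_univ, true_and] at *
    rw [mem_map_swap]; exact hS
  · intro S hS
    simp only [Finset.mem_powerset, Finset.subset_erase, Finset.subset_univ, true_and] at *
    rw [Equiv.swap_comm, mem_map_swap]; exact hS
  · intro S hS
    ext a; simp [Finset.mem_map_equiv, Equiv.swap_apply_self]
  · intro S hS
    ext a; simp [Finset.mem_map_equiv, Equiv.swap_apply_self]
  · intro S hS
    simp only [Finset.mem_powerset, Finset.subset_erase, Finset.subset_univ, true_and] at hS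
    rw [← marginal_swap G i j hij hsym S hS, ← hval]
    unfold shapleyWeight
    rw [Finset.card_map]
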